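/- (Theorem 2, mobile localization convergence.) Let (P_k)_{k≥0} be N×N real matrices, each entrywise nonnegative with all row sums at most 1, and suppose there exist α ∈ (0,1) and a strictly increasing sequence of times k_0 < k_1 < ⋯ such that for every j, every row sum of P_{k_{j+1}−1} ⋯ P_{k_j} is at most 1 − α. Let (B_k), (U_k), (W_k) be arbitrary sequences of real matrices of compatible sizes, and suppose X_{k+1} = P_k X_k + B_k U_k + W_{k+1} and X*_{k+1} = P_k X*_k + B_k U_k + W_{k+1}. Then for every initial estimate X_0 ∈ ℝ^{N×m}, the error converges to zero: X_k − X*_k → 0 as k → ∞. -/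

import Mathlib

open Filter

/-- The backward product `P_{b-1} * P_{b-2} * ⋯ * P_a` of a sequence of matrices over
the window `[a, b)` (equal to `1` when `b ≤ a`). -/
noncomputable def windowProd {N : ℕ} (P : ℕ → Matrix (Fin N) (Fin N) ℝ) (a b : ℕ) :
    Matrix (Fin N) (Fin N) ℝ :=
  ((List.range (b - a)).map fun t => P (b - 1 - t)).prod

lemma windowProd_same {N : ℕ} (P : ℕ → Matrix (Fin N) (Fin N) ℝ) (a : ℕ) :
    windowProd P a a = 1 := by simp [windowProd]

lemma windowProd_succ {N : ℕ} (P : ℕ → Matrix (Fin N) (Fin N) ℝ) {a b : ℕ} (hab : a ≤ b) :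
    windowProd P a (b + 1) = P b * windowProd P a b := by
  unfold windowProd
  rw [Nat.succ_sub hab, List.range_succ_eq_map, List.map_cons, List.map_map, List.prod_cons]
  have h1 : b + 1 - 1 - 0 = b := by omega
  have h2 : List.map ((fun t => P (b + 1 - 1 - t)) ∘ Nat.succ) (List.range (b - a))
      = List.map (fun t => P (b - 1 - t)) (List.range (b - a)) := by
    apply List.map_congr_left
    intro t _
    show P (b + 1 - 1 - (t + 1)) = P (b - 1 - t)
    have ht : b + 1 - 1 - (t + 1) = b - 1 - t := by omega
    rw [ht]
  rw [h1, h2]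

lemma mul_entry_bound {N n : ℕ} {Q : Matrix (Fin N) (Fin N) ℝ} {V : Matrix (Fin N) (Fin n) ℝ}
    {c t : ℝ} (hQ : ∀ i j, 0 ≤ Q i j) (hrowQ : ∀ i, ∑ j, Q i j ≤ c) (ht : 0 ≤ t)
    (hV : ∀ i j, |V i j| ≤ t) : ∀ i j, |(Q * V) i j| ≤ c * t := by
  intro i j
  rw [Matrix.mul_apply]
  calc |∑ l, Q i l * V l j| ≤ ∑ l, |Q i l * V l j| := Finset.abs_sum_le_sum_abs _ _
    _ = ∑ l, Q i l * |V l j| := by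
        refine Finset.sum_congr rfl fun l _ => ?_
        rw [abs_mul, abs_of_nonneg (hQ i l)]
    _ ≤ ∑ l, Q i l * t := Finset.sum_le_sum fun l _ =>
        mul_le_mul_of_nonneg_left (hV l j) (hQ i l)
    _ = (∑ l, Q i l) * t := (Finset.sum_mul _ _ _).symm
    _ ≤ c * t := mul_le_mul_of_nonneg_right (hrowQ i) ht

lemma windowProd_nonneg_rowsum {N : ℕ} (P : ℕ → Matrix (Fin N) (Fin N) ℝ)
    (hP : ∀ k i j, 0 ≤ P k i j) (hrow : ∀ k i, ∑ j, P k i j ≤ 1) (a : ℕ) :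
    ∀ b, a ≤ b → (∀ i j, 0 ≤ windowProd P a b i j) ∧
      (∀ i, ∑ j, windowProd P a b i j ≤ 1) := by
  intro b hb
  induction b, hb using Nat.le_induction with
  | base => simp [windowProd_same, Matrix.one_apply]; intro i j; positivity
  | succ b hb ih =>
    rw [windowProd_succ P hb]
    obtain ⟨ihn, ihr⟩ := ih
    constructor
    · intro i j
      rw [Matrix.mul_apply]
      exact Finset.sum_nonneg fun l _ => mul_nonneg (hP b i l) (ihn l j)
    · intro i
      calc ∑ j, (P b * windowProd P a b) i j
          = ∑ l, P b i l * ∑ j, windowProd P a b l j := by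
            simp_rw [Matrix.mul_apply, Finset.mul_sum]
            rw [Finset.sum_comm]
        _ ≤ ∑ l, P b i l * 1 := Finset.sum_le_sum fun l _ =>
            mul_le_mul_of_nonneg_left (ihr l) (hP b i l)
        _ ≤ 1 := by simpa using hrow b i

/-- Theorem 2 (mobile localization convergence): if each `P_k` is nonnegative with
row sums at most `1`, and along a strictly increasing sequence of times every window
product `P_{k_{j+1}-1} ⋯ P_{k_j}` has row sums at most `1 - α` for some `α ∈ (0,1)`
(each agent reaches an anchor in bounded time, infinitely often), then for the
estimates `X` and true locations `Xstar` evolving by the same barycentric update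
`X_{k+1} = P_k X_k + B_k U_k + W_{k+1}`, the error `X_k - Xstar_k` converges to zero
from every initial estimate `X 0`. -/
theorem mobile_localization_converges {N M m : ℕ} (P : ℕ → Matrix (Fin N) (Fin N) ℝ)
    (hP : ∀ k i j, 0 ≤ P k i j) (hrow : ∀ k i, ∑ j, P k i j ≤ 1)
    (α : ℝ) (hα0 : 0 < α) (hα1 : α < 1)
    (kseq : ℕ → ℕ) (hk : StrictMono kseq)
    (hwin : ∀ j i, ∑ l, windowProd P (kseq j) (kseq (j + 1)) i l ≤ 1 - α)
    (B : ℕ → Matrix (Fin N) (Fin M) ℝ) (U : ℕ → Matrix (Fin M) (Fin m) ℝ)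
    (W : ℕ → Matrix (Fin N) (Fin m) ℝ)
    (X Xstar : ℕ → Matrix (Fin N) (Fin m) ℝ)
    (hX : ∀ k, X (k + 1) = P k * X k + B k * U k + W (k + 1))
    (hXstar : ∀ k, Xstar (k + 1) = P k * Xstar k + B k * U k + W (k + 1)) :
    Tendsto (fun k => X k - Xstar k) atTop (nhds 0) := by
  set E : ℕ → Matrix (Fin N) (Fin m) ℝ := fun k => X k - Xstar k with hE
  have hrec : ∀ k, E (k + 1) = P k * E k := by
    intro k
    simp only [hE, hX k, hXstar k, Matrix.mul_sub]
    abel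
  have hstep : ∀ a b, a ≤ b → E b = windowProd P a b * E a := by
    intro a b hb
    induction b, hb using Nat.le_induction with
    | base => rw [windowProd_same, Matrix.one_mul]
    | succ b hb ih =>
      rw [hrec b, ih, windowProd_succ P hb, Matrix.mul_assoc]
  set C : ℝ := ∑ i, ∑ j, |E (kseq 0) i j| with hC
  have hC0 : 0 ≤ C := Finset.sum_nonneg fun i _ =>
    Finset.sum_nonneg fun j _ => abs_nonneg _
  have hCb : ∀ i j, |E (kseq 0) i j| ≤ C := by
    intro i j
    calc |E (kseq 0) i j| ≤ ∑ j', |E (kseq 0) i j'| :=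
          Finset.single_le_sum (f := fun j' => |E (kseq 0) i j'|) (fun j' _ => abs_nonneg _) (Finset.mem_univ j)
      _ ≤ C := Finset.single_le_sum
          (fun i' (_ : i' ∈ Finset.univ) =>
            Finset.sum_nonneg fun j' _ => abs_nonneg (E (kseq 0) i' j'))
          (Finset.mem_univ i)
  have h1α : (0:ℝ) ≤ 1 - α := by linarith
  have hJ : ∀ J i j, |E (kseq J) i j| ≤ (1 - α) ^ J * C := by
    intro J
    induction J with
    | zero => simpa using hCb
    | succ J ih =>
      have hle : kseq J ≤ kseq (J + 1) := (hk (Nat.lt_succ_self J)).le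
      have hEeq := hstep (kseq J) (kseq (J + 1)) hle
      intro i j
      rw [hEeq]
      have := mul_entry_bound (windowProd_nonneg_rowsum P hP hrow (kseq J) _ hle).1
        (hwin J) (by positivity) ih i j
      calc |(windowProd P (kseq J) (kseq (J+1)) * E (kseq J)) i j|
          ≤ (1 - α) * ((1 - α) ^ J * C) := this
        _ = (1 - α) ^ (J + 1) * C := by ring
  have hall : ∀ J k, kseq J ≤ k → ∀ i j, |E k i j| ≤ (1 - α) ^ J * C := by
    intro J k hkJ i j
    rw [hstep (kseq J) k hkJ]
    have h := mul_entry_bound (windowProd_nonneg_rowsum P hP hrow (kseq J) k hkJ).1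
      (windowProd_nonneg_rowsum P hP hrow (kseq J) k hkJ).2 (by positivity) (hJ J) i j
    simpa using h
  refine tendsto_pi_nhds.mpr ?_
  intro i
  rw [tendsto_pi_nhds]
  intro j
  rw [Metric.tendsto_atTop]
  intro ε hε
  have htend : Tendsto (fun J => (1 - α) ^ J * C) atTop (nhds 0) := by
    have : Tendsto (fun J => (1 - α) ^ J) atTop (nhds 0) :=
      tendsto_pow_atTop_nhds_zero_of_lt_one h1α (by linarith)
    simpa using this.mul_const C
  obtain ⟨J, hJε⟩ := (Metric.tendsto_atTop.mp htend) ε hε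
  refine ⟨kseq J, fun k hkk => ?_⟩
  have h1 := hall J k hkk i j
  have h2 := hJε J le_rfl
  simp only [Pi.zero_apply, Matrix.zero_apply, Real.dist_eq, sub_zero] at h2 ⊢
  have : |(1 - α) ^ J * C| = (1 - α) ^ J * C := abs_of_nonneg (by positivity)
  calc |E k i j| ≤ (1 - α) ^ J * C := h1
    _ < ε := by rwa [this] at h2
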